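/- Let α > 0 and let (a,b) ⊆ ℝ be an open interval. If F is an indefinite MC^α integral of f on (a,b) and f(x) ≥ 0 for every x ∈ (a,b), then F is increasing (monotone nondecreasing) on (a,b). -/

import Mathlib

open Filter Set Topology MeasureTheory

/-- `φ` is an `α`-control function for the pair `(F, f)` on the interval `I`:
`φ` is strictly increasing on `I` and for every `x ∈ I`,
`(F y - F x - f x (y - x)) / (φ (x + α (y - x)) - φ x) → 0` as `y → x` within `I \ {x}`. -/
def IsControlFn (α : ℝ) (I : Set ℝ) (F f φ : ℝ → ℝ) : Prop :=
  StrictMonoOn φ I ∧ ∀ x ∈ I,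
    Tendsto (fun y => (F y - F x - f x * (y - x)) / (φ (x + α * (y - x)) - φ x))
      (𝓝[I \ {x}] x) (𝓝 0)

/-- `F` is an indefinite `MC^α` integral of `f` on `I`. -/
def IsMCIntegral (α : ℝ) (I : Set ℝ) (F f : ℝ → ℝ) : Prop :=
  ∃ φ : ℝ → ℝ, IsControlFn α I F f φ
lemma exists_scale (α δ : ℝ) (hα : 0 < α) (hδ : 0 < δ) (g : ℝ → ℝ)
    (hmono : ∀ ⦃x y : ℝ⦄, 0 < x → x ≤ y → y ≤ α * δ → g x ≤ g y)
    (hnn : ∀ ⦃x : ℝ⦄, 0 < x → x ≤ α * δ → 0 ≤ g x) :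
    ∃ t : ℝ, 0 < t ∧ t < δ ∧ g (α * t) ≤ (α + 1) * (g t + t) := by
  rcases le_or_gt α 1 with h1 | h1
  · refine ⟨α * δ / 2, by positivity, by nlinarith [mul_pos hα hδ], ?_⟩
    have h2 : g (α * (α * δ / 2)) ≤ g (α * δ / 2) :=
      hmono (by positivity) (by nlinarith [mul_pos hα hδ]) (by nlinarith [mul_pos hα hδ])
    have h3 : 0 ≤ g (α * δ / 2) := hnn (by positivity) (by nlinarith [mul_pos hα hδ])
    nlinarith [mul_pos hα hδ]
  · by_contra hcon
    push_neg at hcon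
    -- hcon : ∀ t, 0 < t → t < δ → (α+1) * (g t + t) < g (α * t)
    set C := α + 1 with hC
    have hα0 : (0:ℝ) < α := hα
    have hCα : α < C := by linarith
    have hC1 : (1:ℝ) < C := by linarith
    set M := g (α * (δ / 2)) with hM
    have hMnn : 0 ≤ M := hnn (by positivity) (by nlinarith)
    -- t n = δ/2 / α^n
    have hpow : ∀ n : ℕ, (0:ℝ) < α ^ n := fun n => pow_pos hα n
    have htpos : ∀ n : ℕ, 0 < δ / 2 / α ^ n := fun n => by positivity
    have htlt : ∀ n : ℕ, δ / 2 / α ^ n < δ := by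
      intro n
      have h2 : (1:ℝ) ≤ α ^ n := one_le_pow₀ (le_of_lt h1)
      rw [div_div]
      have : δ / (2 * α ^ n) ≤ δ / 2 :=
        div_le_div_of_nonneg_left (le_of_lt hδ) (by norm_num) (by nlinarith)
      linarith
    have key : ∀ n : ℕ, C ^ n * (g (δ / 2 / α ^ n) + δ / 2 / α ^ n) ≤ M := by
      intro n
      induction n with
      | zero =>
        simp only [pow_zero, one_mul]
        have := hcon (δ / 2) (by positivity) (by linarith)
        have h3 : 0 ≤ g (δ / 2) := hnn (by positivity) (by nlinarith)
        norm_num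
        nlinarith
      | succ n ih =>
        have heq : α * (δ / 2 / α ^ (n+1)) = δ / 2 / α ^ n := by
          field_simp [pow_succ]; ring
        have hstep := hcon (δ / 2 / α ^ (n+1)) (htpos (n+1)) (htlt (n+1))
        rw [heq] at hstep
        have hCp : (0:ℝ) < C ^ n := pow_pos (by linarith) n
        have h4 : 0 < δ / 2 / α ^ n := htpos n
        calc C ^ (n+1) * (g (δ / 2 / α ^ (n+1)) + δ / 2 / α ^ (n+1))
            = C ^ n * (C * (g (δ / 2 / α ^ (n+1)) + δ / 2 / α ^ (n+1))) := by ring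
          _ ≤ C ^ n * (g (δ / 2 / α ^ n)) := by
              apply mul_le_mul_of_nonneg_left (le_of_lt hstep) (le_of_lt hCp)
          _ ≤ C ^ n * (g (δ / 2 / α ^ n) + δ / 2 / α ^ n) := by nlinarith
          _ ≤ M := ih
    -- contradiction: C^n * (δ/2/α^n) = (C/α)^n * δ/2 → ∞
    obtain ⟨n, hn⟩ := pow_unbounded_of_one_lt (M / (δ / 2)) (show (1:ℝ) < C / α by
      rw [lt_div_iff₀ hα]; linarith)
    have h5 := key n
    have h6 : 0 ≤ g (δ / 2 / α ^ n) := hnn (htpos n) (by nlinarith [htlt n, htpos n])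
    have h7 : C ^ n * (δ / 2 / α ^ n) = (C / α) ^ n * (δ / 2) := by
      rw [div_pow]; field_simp
    have hCp : (0:ℝ) < C ^ n := pow_pos (by linarith) n
    have h8 : (C / α) ^ n * (δ / 2) ≤ M := by nlinarith [key n]
    have h9 : M / (δ / 2) * (δ / 2) = M := by field_simp
    nlinarith [hn]

set_option maxHeartbeats 1000000 in
/-- An indefinite `MC^α` integral of a nonnegative function is increasing. -/
theorem stmt_5 (α : ℝ) (hα : 0 < α) (a b : ℝ) (F f : ℝ → ℝ)
    (hF : IsMCIntegral α (Set.Ioo a b) F f)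
    (hf : ∀ x ∈ Set.Ioo a b, 0 ≤ f x) :
    MonotoneOn F (Set.Ioo a b) := by
  obtain ⟨φ, hφ, hctrl⟩ := hF
  have hm := hφ.monotoneOn
  intro u hu v hv huv
  rcases eq_or_lt_of_le huv with rfl | huv
  · exact le_rfl
  have key : ∀ ε : ℝ, 0 < ε → F u - F v ≤ ε * ((φ v - φ u) + (v - u)) := by
    intro ε hε
    set S : Set ℝ := {t | t ∈ Set.Icc u v ∧ F u - F t ≤ ε * ((φ t - φ u) + (t - u))} with hSdef
    have huS : u ∈ S := ⟨⟨le_rfl, le_of_lt huv⟩, by simp⟩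
    have hSne : S.Nonempty := ⟨u, huS⟩
    have hSbdd : BddAbove S := ⟨v, fun t ht => ht.1.2⟩
    set s := sSup S with hsdef
    have hus : u ≤ s := le_csSup hSbdd huS
    have hsv : s ≤ v := csSup_le hSne (fun t ht => ht.1.2)
    have hsI : s ∈ Set.Ioo a b := ⟨lt_of_lt_of_le hu.1 hus, lt_of_le_of_lt hsv hv.2⟩
    have hfs : 0 ≤ f s := hf s hsI
    have hα1 : (0:ℝ) < α + 1 := by linarith
    set ε₂ := ε / (2 * (α + 1)) with hε₂def
    have hε₂pos : 0 < ε₂ := by rw [hε₂def]; positivity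
    have hε₂ε : ε₂ < ε := by
      rw [hε₂def, div_lt_iff₀ (by linarith)]
      nlinarith
    obtain ⟨δ₀, hδ₀pos, hδ₀⟩ := (Metric.tendsto_nhdsWithin_nhds.mp (hctrl s hsI)) ε₂ hε₂pos
    clear_value s ε₂
    set δ := min δ₀ (min ((s - a) / (2 * α)) ((b - s) / (2 * α))) with hδdef
    have hsa : 0 < s - a := by linarith [hsI.1]
    have hbs : 0 < b - s := by linarith [hsI.2]
    have hδpos : 0 < δ := by
      rw [hδdef]
      exact lt_min hδ₀pos (lt_min (by positivity) (by positivity))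
    have hδa : α * δ ≤ (s - a) / 2 := by
      have h1 : δ ≤ (s - a) / (2 * α) := le_trans (min_le_right _ _) (min_le_left _ _)
      have h2 : α * ((s - a) / (2 * α)) = (s - a) / 2 := by field_simp
      nlinarith [mul_le_mul_of_nonneg_left h1 hα.le]
    have hδb : α * δ ≤ (b - s) / 2 := by
      have h1 : δ ≤ (b - s) / (2 * α) := le_trans (min_le_right _ _) (min_le_right _ _)
      have h2 : α * ((b - s) / (2 * α)) = (b - s) / 2 := by field_simp
      nlinarith [mul_le_mul_of_nonneg_left h1 hα.le]
    have hδδ₀ : δ ≤ δ₀ := min_le_left _ _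
    clear_value δ
    -- the fundamental estimate
    have hbound : ∀ y : ℝ, y ∈ Set.Ioo a b → y ≠ s → |y - s| < δ →
        |F y - F s - f s * (y - s)| ≤ ε₂ * |φ (s + α * (y - s)) - φ s| := by
      intro y hy hys hyd
      have habs : α * |y - s| < α * δ := mul_lt_mul_of_pos_left hyd hα
      have h1 : |α * (y - s)| = α * |y - s| := by rw [abs_mul, abs_of_pos hα]
      have h4 := abs_lt.mp (show |α * (y - s)| < (s - a) / 2 by rw [h1]; linarith)
      have h5 := abs_lt.mp (show |α * (y - s)| < (b - s) / 2 by rw [h1]; linarith)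
      have hzI : s + α * (y - s) ∈ Set.Ioo a b := by
        constructor
        · linarith [h4.1]
        · linarith [h5.2]
      have hzs : s + α * (y - s) ≠ s := by
        intro h
        apply hys
        have h6 : α * (y - s) = 0 := by linarith
        have := (mul_eq_zero.mp h6).resolve_left (ne_of_gt hα)
        linarith
      have hDne : φ (s + α * (y - s)) - φ s ≠ 0 :=
        sub_ne_zero.mpr (hφ.injOn.ne hzI hsI hzs)
      have hq := hδ₀ (x := y) ⟨hy, hys⟩
        (by rw [Real.dist_eq]; exact lt_of_lt_of_le hyd hδδ₀)
      rw [Real.dist_eq, sub_zero, abs_div] at hq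
      have hD : 0 < |φ (s + α * (y - s)) - φ s| := abs_pos.mpr hDne
      have := (div_le_iff₀ hD).mp (le_of_lt hq)
      linarith
    -- Step 1 : s ∈ S
    have hsIcc : s ∈ Set.Icc u v := ⟨hus, hsv⟩
    have hsS : s ∈ S := by
      by_contra hns
      have hineq : ε * ((φ s - φ u) + (s - u)) < F u - F s := by
        by_contra h
        push_neg at h
        exact hns ⟨hsIcc, h⟩
      set γ := F u - F s - ε * ((φ s - φ u) + (s - u)) with hγdef
      have hγpos : 0 < γ := by rw [hγdef]; linarith
      have hu_lt_s : u < s := lt_of_le_of_ne hus (fun h => hns (h ▸ huS))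
      set Φ := sSup (φ '' Set.Ico u s) with hΦdef
      have hne : (φ '' Set.Ico u s).Nonempty := ⟨φ u, u, ⟨le_rfl, hu_lt_s⟩, rfl⟩
      have hmemI : ∀ x ∈ Set.Ico u s, x ∈ Set.Ioo a b := fun x hx =>
        ⟨lt_of_lt_of_le hu.1 hx.1, lt_trans hx.2 hsI.2⟩
      have hbddΦ : BddAbove (φ '' Set.Ico u s) := by
        refine ⟨φ s, ?_⟩
        rintro _ ⟨x, hx, rfl⟩
        exact hm (hmemI x hx) hsI (le_of_lt hx.2)
      have hΦle : Φ ≤ φ s := csSup_le hne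
        (by rintro _ ⟨x, hx, rfl⟩; exact hm (hmemI x hx) hsI (le_of_lt hx.2))
      set θ := γ / (4 * ε₂) with hθdef
      have hθpos : 0 < θ := by
        rw [hθdef]
        exact div_pos hγpos (by linarith)
      clear_value γ Φ θ
      obtain ⟨_, ⟨x, hxmem, rfl⟩, hxgt⟩ := exists_lt_of_lt_csSup hne
        (show Φ - θ < sSup (φ '' Set.Ico u s) by rw [← hΦdef]; linarith)
      have hxs : x < s := hxmem.2
      set m := min ((s - x) / α) (min δ (γ / (4 * (|f s| + 1)))) with hmdef
      have hfs1 : (0:ℝ) < 4 * (|f s| + 1) := by positivity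
      have hmpos : 0 < m := by
        rw [hmdef]
        exact lt_min (div_pos (by linarith) hα) (lt_min hδpos (div_pos hγpos hfs1))
      have hmx : m ≤ (s - x) / α := min_le_left _ _
      have hmδ : m ≤ δ := le_trans (min_le_right _ _) (min_le_left _ _)
      have hmγ : m ≤ γ / (4 * (|f s| + 1)) := le_trans (min_le_right _ _) (min_le_right _ _)
      clear_value m
      obtain ⟨w, hwS, hwgt⟩ := exists_lt_of_lt_csSup hSne (show s - m < sSup S by rw [← hsdef]; linarith)
      have hwle : w ≤ s := by rw [hsdef]; exact le_csSup hSbdd hwS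
      have hwne : w ≠ s := fun h => hns (h ▸ hwS)
      have hwlt : w < s := lt_of_le_of_ne hwle hwne
      have hwI : w ∈ Set.Ioo a b := ⟨lt_of_lt_of_le hu.1 hwS.1.1, lt_trans hwlt hsI.2⟩
      have hwd : |w - s| < δ := by
        rw [abs_sub_lt_iff]
        constructor <;> linarith
      have hB := hbound w hwI hwne hwd
      set z := s + α * (w - s) with hzdef
      have hzx : x ≤ z := by
        have h3 : s - w < (s - x) / α := lt_of_lt_of_le (by linarith) hmx
        have h4 : (s - w) * α < s - x := (lt_div_iff₀ hα).mp h3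
        rw [hzdef]; nlinarith
      have hzles : z ≤ s := by
        rw [hzdef]; nlinarith
      have hzI : z ∈ Set.Ioo a b := ⟨lt_of_lt_of_le (hmemI x hxmem).1 hzx, by linarith [hsI.2]⟩
      have hφzx : φ x ≤ φ z := hm (hmemI x hxmem) hzI hzx
      have hφzs : φ z ≤ φ s := hm hzI hsI hzles
      have hDabs : |φ z - φ s| = φ s - φ z := by
        rw [abs_sub_comm, abs_of_nonneg (by linarith)]
      rw [hDabs] at hB
      clear_value z
      have hφwΦ : φ w ≤ Φ := by
        rw [hΦdef]; exact le_csSup hbddΦ ⟨w, ⟨hwS.1.1, hwlt⟩, rfl⟩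
      have h8 := (abs_le.mp hB).2
      have hprod : f s * (w - s) = -(f s * (s - w)) := by ring
      have h6 : F w - f s * (s - w) - ε₂ * (φ s - φ z) ≤ F s := by
        nlinarith [mul_nonneg hfs (show (0:ℝ) ≤ s - w by linarith)]
      -- f s * (s - w) < γ / 4
      have h10 : s - w < γ / (4 * (|f s| + 1)) := lt_of_lt_of_le (by linarith) hmγ
      have h13 : (s - w) * (4 * (|f s| + 1)) < γ := (lt_div_iff₀ hfs1).mp h10
      have h9 : f s * (s - w) < γ / 4 := by
        nlinarith [mul_le_mul_of_nonneg_right (le_abs_self (f s))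
          (show (0:ℝ) ≤ s - w by linarith)]
      -- ε₂ * (φ s - φ z) ≤ ε * (φ s - φ w) + γ / 4
      have h17 : ε₂ * θ = γ / 4 := by
        rw [hθdef]
        field_simp
      have ha1 : ε₂ * (φ s - φ z) ≤ ε₂ * ((φ s - Φ) + θ) :=
        mul_le_mul_of_nonneg_left (by linarith) hε₂pos.le
      have ha2 : ε₂ * ((φ s - Φ) + θ) = ε₂ * (φ s - Φ) + γ / 4 := by
        rw [mul_add, h17]
      have ha3 : ε₂ * (φ s - Φ) ≤ ε * (φ s - Φ) :=
        mul_le_mul_of_nonneg_right hε₂ε.le (by linarith)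
      have ha4 : ε * (φ s - Φ) ≤ ε * (φ s - φ w) :=
        mul_le_mul_of_nonneg_left (by linarith) hε.le
      have h14 : ε₂ * (φ s - φ z) ≤ ε * (φ s - φ w) + γ / 4 := by linarith
      -- combine
      have hwSineq := hwS.2
      have hεsw : 0 ≤ ε * (s - w) := mul_nonneg hε.le (by linarith)
      linarith [h6, h9, h14, hineq, hγdef, hwSineq, hεsw]
    -- Step 2 : s = v
    have hseqv : s = v := by
      by_contra hnev
      have hslt : s < v := lt_of_le_of_ne hsv hnev
      set δ' := min δ (v - s) with hδ'def
      have hδ'pos : 0 < δ' := lt_min hδpos (by linarith)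
      have hδ'δ : δ' ≤ δ := min_le_left _ _
      have hδ'v : δ' ≤ v - s := min_le_right _ _
      set g : ℝ → ℝ := fun r => φ (s + r) - φ s with hgdef
      have hαδ' : α * δ' ≤ α * δ := mul_le_mul_of_nonneg_left hδ'δ hα.le
      have hdom : ∀ ⦃r : ℝ⦄, 0 < r → r ≤ α * δ' → s + r ∈ Set.Ioo a b := by
        intro r hr hrle
        exact ⟨by linarith [hsI.1], by linarith [hsI.2]⟩
      have hgmono : ∀ ⦃x y : ℝ⦄, 0 < x → x ≤ y → y ≤ α * δ' → g x ≤ g y := by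
        intro x y hx hxy hy
        have h1 := hdom hx (le_trans hxy hy)
        have h2 := hdom (lt_of_lt_of_le hx hxy) hy
        have := hm h1 h2 (by linarith)
        simp only [hgdef]
        linarith
      have hgnn : ∀ ⦃x : ℝ⦄, 0 < x → x ≤ α * δ' → 0 ≤ g x := by
        intro x hx hxle
        have h1 := hdom hx hxle
        have := hm hsI h1 (by linarith)
        simp only [hgdef]
        linarith
      clear_value δ' g
      obtain ⟨t, ht0, htδ', hgood⟩ := exists_scale α δ' hα hδ'pos g hgmono hgnn
      set y₂ := s + t with hy₂def
      clear_value y₂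
      have hy₂v : y₂ < v := by rw [hy₂def]; linarith
      have hy₂I : y₂ ∈ Set.Ioo a b := ⟨by rw [hy₂def]; linarith [hsI.1], lt_trans hy₂v hv.2⟩
      have hy₂s : y₂ ≠ s := by rw [hy₂def]; intro h; linarith
      have hy₂d : |y₂ - s| < δ := by
        rw [hy₂def, show s + t - s = t by ring, abs_of_pos ht0]
        linarith
      have hB := hbound y₂ hy₂I hy₂s hy₂d
      rw [show y₂ - s = t by rw [hy₂def]; ring] at hB
      have hαt : 0 < α * t := by positivity
      have hαtle : α * t ≤ α * δ' := mul_le_mul_of_nonneg_left htδ'.le hα.le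
      have hDnn : 0 ≤ g (α * t) := hgnn hαt hαtle
      have hDeq : φ (s + α * t) - φ s = g (α * t) := by simp [hgdef]
      rw [hDeq, abs_of_nonneg hDnn] at hB
      have h1 := (abs_le.mp hB).1
      have h3 : ε₂ * g (α * t) ≤ ε₂ * ((α + 1) * (g t + t)) :=
        mul_le_mul_of_nonneg_left hgood hε₂pos.le
      have h4 : ε₂ * ((α + 1) * (g t + t)) = (ε / 2) * (g t + t) := by
        rw [hε₂def]
        have hne : (α:ℝ) + 1 ≠ 0 := by linarith
        field_simp
      have h2 : F s - (ε / 2) * (g t + t) ≤ F y₂ := by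
        have hfst : 0 ≤ f s * t := mul_nonneg hfs ht0.le
        linarith [h1, h3, h4, hfst]
      have hgt : g t = φ y₂ - φ s := by rw [hy₂def]; simp [hgdef]
      have hφy₂s : φ s ≤ φ y₂ := hm hsI hy₂I (by rw [hy₂def]; linarith)
      have h6 := hsS.2
      have h5 : F u - F y₂ ≤ ε * ((φ y₂ - φ u) + (y₂ - u)) := by
        rw [hgt] at h2
        have hb1 : 0 ≤ ε * (φ y₂ - φ s) := mul_nonneg hε.le (by linarith)
        have hb2 : 0 ≤ ε * t := mul_nonneg hε.le ht0.le
        rw [hy₂def] at h2 hb1 ⊢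
        linarith [h2, h6, hb1, hb2]
      have hy₂S : y₂ ∈ S := ⟨⟨by rw [hy₂def]; linarith, le_of_lt hy₂v⟩, h5⟩
      have hcontr : y₂ ≤ s := by rw [hsdef]; exact le_csSup hSbdd hy₂S
      rw [hy₂def] at hcontr
      linarith
    rw [hseqv] at hsS
    exact hsS.2
  -- conclude from key
  by_contra hlt
  push_neg at hlt
  have hK : 0 < (φ v - φ u) + (v - u) := by
    have := hφ hu hv huv
    linarith
  have hKne : (φ v - φ u) + (v - u) ≠ 0 := ne_of_gt hK
  have h1 := key ((F u - F v) / (2 * ((φ v - φ u) + (v - u)))) (by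
    have h0 : 0 < F u - F v := by linarith
    positivity)
  have h2 : (F u - F v) / (2 * ((φ v - φ u) + (v - u))) * ((φ v - φ u) + (v - u))
      = (F u - F v) / 2 := by
    field_simp
  rw [h2] at h1
  linarith
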